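/- arXiv:1705.05380 — 3 statements merged into one kernel-verified Lean document; each statement's English description precedes it below -/
import Mathlib

section
/- For all t ∈ (0,1] and x ∈ (0, π), one has (sin(tx) − tx·cos(tx)) / (sin(x) − x·cos(x)) ≥ t³. -/
open Real

lemma heis_g_pos {s : ℝ} (h0 : 0 < s) (hπ : s < π) : 0 < sin s - s * cos s := by
  have key : StrictMonoOn (fun s => sin s - s * cos s) (Set.Icc 0 π) := by
    apply strictMonoOn_of_deriv_pos (convex_Icc 0 π)
    · fun_prop
    · intro y hy
      rw [interior_Icc] at hy
      have hd : HasDerivAt (fun s => sin s - s * cos s) (y * sin y) y := by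
        have h2 : HasDerivAt (fun s : ℝ => s * cos s) (cos y - y * sin y) y := by
          have := (hasDerivAt_id y).mul (Real.hasDerivAt_cos y)
          refine this.congr_deriv ?_
          simp; ring
        have := (Real.hasDerivAt_sin y).sub h2
        refine this.congr_deriv ?_
        ring
      rw [hd.deriv]
      exact mul_pos hy.1 (Real.sin_pos_of_pos_of_lt_pi hy.1 hy.2)
  have := key (Set.left_mem_Icc.mpr Real.pi_pos.le) ⟨h0.le, hπ.le⟩ h0
  simpa using this

lemma heis_h_neg {s : ℝ} (h0 : 0 < s) (hπ : s < π) :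
    s ^ 2 * sin s - 3 * sin s + 3 * (s * cos s) < 0 := by
  have key : StrictAntiOn (fun s => s ^ 2 * sin s - 3 * sin s + 3 * (s * cos s))
      (Set.Icc 0 π) := by
    apply strictAntiOn_of_deriv_neg (convex_Icc 0 π)
    · fun_prop
    · intro y hy
      rw [interior_Icc] at hy
      have hd : HasDerivAt (fun s => s ^ 2 * sin s - 3 * sin s + 3 * (s * cos s))
          (y * (y * cos y - sin y)) y := by
        have h1 : HasDerivAt (fun s : ℝ => s ^ 2 * sin s)
            (2 * y * sin y + y ^ 2 * cos y) y := by
          have := (hasDerivAt_pow 2 y).mul (Real.hasDerivAt_sin y)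
          refine this.congr_deriv ?_
          ring
        have h2 : HasDerivAt (fun s : ℝ => 3 * sin s) (3 * cos y) y :=
          (Real.hasDerivAt_sin y).const_mul 3
        have h3 : HasDerivAt (fun s : ℝ => 3 * (s * cos s))
            (3 * (cos y - y * sin y)) y := by
          have hm : HasDerivAt (fun s : ℝ => s * cos s) (cos y - y * sin y) y := by
            have := (hasDerivAt_id y).mul (Real.hasDerivAt_cos y)
            refine this.congr_deriv ?_
            simp; ring
          exact hm.const_mul 3
        have := (h1.sub h2).add h3
        refine this.congr_deriv ?_
        ring
      rw [hd.deriv]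
      have hg := heis_g_pos hy.1 hy.2
      nlinarith [mul_pos hy.1 hg]
  have := key (Set.left_mem_Icc.mpr Real.pi_pos.le) ⟨h0.le, hπ.le⟩ h0
  simpa using this

lemma heis_f_deriv {y : ℝ} (hy : y ≠ 0) :
    HasDerivAt (fun s => (sin s - s * cos s) / s ^ 3)
      ((y * sin y * y ^ 3 - (sin y - y * cos y) * (3 * y ^ 2)) / (y ^ 3) ^ 2) y := by
  have hnum : HasDerivAt (fun s : ℝ => sin s - s * cos s) (y * sin y) y := by
    have h2 : HasDerivAt (fun s : ℝ => s * cos s) (cos y - y * sin y) y := by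
      have := (hasDerivAt_id y).mul (Real.hasDerivAt_cos y)
      refine this.congr_deriv ?_
      simp; ring
    have := (Real.hasDerivAt_sin y).sub h2
    refine this.congr_deriv ?_
    ring
  have hden : HasDerivAt (fun s : ℝ => s ^ 3) (3 * y ^ 2) y := by
    have := hasDerivAt_pow 3 y
    norm_num at this
    exact this
  exact hnum.div hden (pow_ne_zero 3 hy)

lemma heis_f_anti : AntitoneOn (fun s => (sin s - s * cos s) / s ^ 3) (Set.Ioo 0 π) := by
  apply antitoneOn_of_deriv_nonpos (convex_Ioo 0 π)
  · apply ContinuousOn.div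
    · fun_prop
    · fun_prop
    · intro y hy
      exact pow_ne_zero 3 (ne_of_gt hy.1)
  · intro y hy
    rw [interior_Ioo] at hy
    exact (heis_f_deriv (ne_of_gt hy.1)).differentiableAt.differentiableWithinAt
  · intro y hy
    rw [interior_Ioo] at hy
    rw [(heis_f_deriv (ne_of_gt hy.1)).deriv]
    apply div_nonpos_of_nonpos_of_nonneg
    · have hh := heis_h_neg hy.1 hy.2
      nlinarith [sq_nonneg y]
    · positivity

theorem heisenberg_scalar_inequality (t x : ℝ)
    (ht : t ∈ Set.Ioc (0 : ℝ) 1) (hx : x ∈ Set.Ioo (0 : ℝ) π) :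
    (sin (t * x) - t * x * cos (t * x)) / (sin x - x * cos x) ≥ t ^ 3 := by
  obtain ⟨ht0, ht1⟩ := ht
  obtain ⟨hx0, hxπ⟩ := hx
  have ha0 : 0 < t * x := mul_pos ht0 hx0
  have hax : t * x ≤ x := by nlinarith
  have haπ : t * x < π := lt_of_le_of_lt hax hxπ
  have hfa := heis_f_anti ⟨ha0, haπ⟩ ⟨hx0, hxπ⟩ hax
  have hgx := heis_g_pos hx0 hxπ
  have hga := heis_g_pos ha0 haπ
  rw [ge_iff_le, le_div_iff₀ hgx]
  have key : (sin x - x * cos x) / x ^ 3 ≤ (sin (t * x) - t * x * cos (t * x)) / (t * x) ^ 3 :=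
    hfa
  rw [div_le_div_iff₀ (by positivity) (by positivity)] at key
  nlinarith [pow_pos hx0 3, pow_pos ht0 3]
end

section
/- Let N ∈ ℝ and define f_u,x(t) := t²·(t²u² + 3tux + 3x²)/(u² + 3ux + 3x²) for x > 0 and u ∈ ℝ (note u² + 3ux + 3x² > 0 always). Then f_u,x(t) ≥ t^N for all t ∈ [0,1], all x > 0 and all u ∈ ℝ, if and only if N ≥ 5. -/
theorem grushin_horizontal_distortion_sharp (N : ℝ) :
    (∀ t ∈ Set.Icc (0 : ℝ) 1, ∀ x : ℝ, 0 < x → ∀ u : ℝ,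
      t ^ 2 * (t ^ 2 * u ^ 2 + 3 * t * u * x + 3 * x ^ 2) /
        (u ^ 2 + 3 * u * x + 3 * x ^ 2) ≥ t ^ N) ↔ 5 ≤ N := by
  constructor
  · -- hard direction: the hypothesis forces N ≥ 5
    intro h
    by_contra h5
    push_neg at h5
    obtain ⟨ε, hεdef⟩ : ∃ ε : ℝ, ε = 5 - N := ⟨_, rfl⟩
    have hε0 : 0 < ε := by rw [hεdef]; linarith
    obtain ⟨δ, hδdef⟩ : ∃ δ : ℝ, δ = min (1/2) ε := ⟨_, rfl⟩
    have hδ0 : 0 < δ := hδdef ▸ lt_min (by norm_num) hε0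
    have hδ2 : δ ≤ 1/2 := hδdef ▸ min_le_left _ _
    have hδε : δ ≤ ε := hδdef ▸ min_le_right _ _
    obtain ⟨t, htdef⟩ : ∃ t : ℝ, t = 1 - δ := ⟨_, rfl⟩
    have ht0 : 0 < t := by rw [htdef]; linarith
    have ht1 : t < 1 := by rw [htdef]; linarith
    obtain ⟨u, hudef⟩ : ∃ u : ℝ, u = -3*(1+t)/(2*t) := ⟨_, rfl⟩
    have key := h t ⟨ht0.le, ht1.le⟩ 1 one_pos u
    -- lower bound for t ^ N
    have hlog : Real.log t ≤ t - 1 := Real.log_le_sub_one_of_pos ht0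
    have htN : t ^ (5:ℕ) * (1 + ε*δ) ≤ t ^ N := by
      have h1 : t ^ N = t ^ (5:ℕ) * t ^ (-ε) := by
        rw [← Real.rpow_natCast t 5, ← Real.rpow_add ht0]
        norm_num [hεdef]
      rw [h1]
      have h2 : t ^ (-ε) = Real.exp (-ε * Real.log t) := by
        rw [Real.rpow_def_of_pos ht0]
        ring_nf
      have h3 : 1 + ε*δ ≤ t ^ (-ε) := by
        rw [h2]
        have he := Real.add_one_le_exp (-ε * Real.log t)
        have h4 : ε * δ ≤ -ε * Real.log t := by nlinarith
        linarith
      nlinarith [pow_pos ht0 5]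
    -- exact value of f at the minimizing u
    have hDpos : (0:ℝ) < u ^ 2 + 3 * u * 1 + 3 * 1 ^ 2 := by
      nlinarith [sq_nonneg (u + 3/2)]
    have h3t : (0:ℝ) < 3 + t^2 := by positivity
    have hfval : t ^ 2 * (t ^ 2 * u ^ 2 + 3 * t * u * 1 + 3 * 1 ^ 2) /
        (u ^ 2 + 3 * u * 1 + 3 * 1 ^ 2) = t^4*(1+3*t^2)/(3+t^2) := by
      rw [div_eq_div_iff hDpos.ne' h3t.ne', hudef]
      field_simp
      ring
    rw [hfval] at key
    -- but this exact value is < t^5 * (1 + ε δ) ≤ t^N, contradiction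
    have hδt : δ = 1 - t := by linarith
    subst hδt
    have hlt : t^4*(1+3*t^2)/(3+t^2) < t ^ (5:ℕ) * (1 + ε*(1-t)) := by
      rw [div_lt_iff₀ h3t]
      have hthalf : (1:ℝ)/2 ≤ t := by linarith
      have h38 : (13:ℝ)/8 ≤ 3*t + t^3 := by nlinarith
      have hkey : (1-t)^2 < ε * (3*t + t^3) := by
        nlinarith [mul_le_mul_of_nonneg_left h38 hε0.le,
          mul_le_mul_of_nonneg_left hδ2 hδ0.le]
      nlinarith [mul_pos (pow_pos ht0 4) (mul_pos hδ0 (sub_pos.2 hkey))]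
    linarith
  · -- easy direction: f ≥ t^5 ≥ t^N
    intro hN t ht x hx u
    obtain ⟨ht0, ht1⟩ := ht
    have hD : (0:ℝ) < u ^ 2 + 3 * u * x + 3 * x ^ 2 := by
      nlinarith [sq_nonneg (u + 3/2 * x), sq_nonneg x]
    rcases eq_or_lt_of_le ht0 with h0 | h0
    · -- t = 0
      rw [← h0]
      rw [Real.zero_rpow (by linarith : N ≠ 0)]
      simp
    · have h5 : t ^ N ≤ t ^ (5:ℝ) :=
        Real.rpow_le_rpow_of_exponent_ge h0 ht1 hN
      have h5' : t ^ (5:ℝ) = t ^ (5:ℕ) := by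
        rw [show (5:ℝ) = ((5:ℕ):ℝ) by norm_num, Real.rpow_natCast]
      rw [ge_iff_le]
      refine le_trans (h5.trans_eq h5') ?_
      rw [le_div_iff₀ hD]
      rcases eq_or_lt_of_le ht1 with h1 | h1
      · rw [h1]; ring_nf; exact le_refl _
      · have h1t : 0 < 1 - t := by linarith
        nlinarith [mul_nonneg (sq_nonneg t) (sq_nonneg (2*t*(1-t)*u + 3*(1-t^2)*x)),
          mul_nonneg (mul_nonneg (sq_nonneg t) (sq_nonneg ((1-t)^2))) (sq_nonneg x),
          mul_pos (mul_pos h0 h0) h1t, h0.le, h1t.le]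
end

section
/- Define W̄(z) := (64 − 25z²)·sin(z)² + 10z(z² − 8)·cos(z)·sin(z) + z²(16 − z²)·cos(z)². Then W̄(z) ≥ 0 for all z ∈ (0, π). -/
open Real

lemma aux_nonneg (f f' : ℝ → ℝ) (hf : ∀ x, HasDerivAt f (f' x) x) (h0 : f 0 = 0)
    (hd : ∀ x, 0 ≤ x → 0 ≤ f' x) : ∀ x, 0 ≤ x → 0 ≤ f x := by
  intro x hx
  have hmono : MonotoneOn f (Set.Ici (0:ℝ)) := by
    apply monotoneOn_of_deriv_nonneg (convex_Ici 0)
      (fun y _ => (hf y).continuousAt.continuousWithinAt)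
    · intro y hy
      rw [interior_Ici] at hy
      exact ((hf y).hasDerivWithinAt).differentiableWithinAt
    · intro y hy
      rw [interior_Ici] at hy
      rw [(hf y).deriv]
      exact hd y hy.le
  have := hmono (Set.self_mem_Ici) (Set.mem_Ici.2 hx) hx
  linarith

lemma sin_ge3 (x : ℝ) (hx : 0 ≤ x) : x - x^3/6 ≤ sin x := by
  have := aux_nonneg (fun x => sin x - (x - x^3/6)) (fun x => cos x - (1 - x^2/2))
    (fun x => by
      have h := (Real.hasDerivAt_sin x).sub
        ((hasDerivAt_id x).sub ((hasDerivAt_pow 3 x).div_const 6))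
      exact h.congr_deriv (by simp; ring))
    (by simp)
    (fun x _ => by have := Real.one_sub_sq_div_two_le_cos (x := x); linarith)
    x hx
  linarith

lemma cos_le4 (x : ℝ) (hx : 0 ≤ x) : cos x ≤ 1 - x^2/2 + x^4/24 := by
  have := aux_nonneg (fun x => 1 - x^2/2 + x^4/24 - cos x)
    (fun x => sin x - (x - x^3/6))
    (fun x => by
      have h := ((((hasDerivAt_const x (1:ℝ)).sub ((hasDerivAt_pow 2 x).div_const 2)).add
        ((hasDerivAt_pow 4 x).div_const 24)).sub (Real.hasDerivAt_cos x))
      exact h.congr_deriv (by simp; ring))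
    (by simp)
    (fun x hx => by have := sin_ge3 x hx; linarith)
    x hx
  linarith

lemma sin_le5 (x : ℝ) (hx : 0 ≤ x) : sin x ≤ x - x^3/6 + x^5/120 := by
  have := aux_nonneg (fun x => x - x^3/6 + x^5/120 - sin x)
    (fun x => 1 - x^2/2 + x^4/24 - cos x)
    (fun x => by
      have h := ((((hasDerivAt_id x).sub ((hasDerivAt_pow 3 x).div_const 6)).add
        ((hasDerivAt_pow 5 x).div_const 120)).sub (Real.hasDerivAt_sin x))
      exact h.congr_deriv (by simp; ring))
    (by simp)
    (fun x hx => by have := cos_le4 x hx; linarith)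
    x hx
  linarith

lemma cos_ge6 (x : ℝ) (hx : 0 ≤ x) : 1 - x^2/2 + x^4/24 - x^6/720 ≤ cos x := by
  have := aux_nonneg (fun x => cos x - (1 - x^2/2 + x^4/24 - x^6/720))
    (fun x => x - x^3/6 + x^5/120 - sin x)
    (fun x => by
      have h := (Real.hasDerivAt_cos x).sub
        ((((hasDerivAt_const x (1:ℝ)).sub ((hasDerivAt_pow 2 x).div_const 2)).add
          ((hasDerivAt_pow 4 x).div_const 24)).sub ((hasDerivAt_pow 6 x).div_const 720))
      exact h.congr_deriv (by simp; ring))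
    (by simp)
    (fun x hx => by have := sin_le5 x hx; linarith)
    x hx
  linarith

lemma sin_ge7 (x : ℝ) (hx : 0 ≤ x) : x - x^3/6 + x^5/120 - x^7/5040 ≤ sin x := by
  have := aux_nonneg (fun x => sin x - (x - x^3/6 + x^5/120 - x^7/5040))
    (fun x => cos x - (1 - x^2/2 + x^4/24 - x^6/720))
    (fun x => by
      have h := (Real.hasDerivAt_sin x).sub
        (((((hasDerivAt_id x).sub ((hasDerivAt_pow 3 x).div_const 6)).add
          ((hasDerivAt_pow 5 x).div_const 120)).sub ((hasDerivAt_pow 7 x).div_const 5040)))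
      exact h.congr_deriv (by simp; ring))
    (by simp)
    (fun x hx => by have := cos_ge6 x hx; linarith)
    x hx
  linarith

lemma cos_le8 (x : ℝ) (hx : 0 ≤ x) : cos x ≤ 1 - x^2/2 + x^4/24 - x^6/720 + x^8/40320 := by
  have := aux_nonneg (fun x => 1 - x^2/2 + x^4/24 - x^6/720 + x^8/40320 - cos x)
    (fun x => sin x - (x - x^3/6 + x^5/120 - x^7/5040))
    (fun x => by
      have h := (((((hasDerivAt_const x (1:ℝ)).sub ((hasDerivAt_pow 2 x).div_const 2)).add
        ((hasDerivAt_pow 4 x).div_const 24)).sub ((hasDerivAt_pow 6 x).div_const 720)).add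
        ((hasDerivAt_pow 8 x).div_const 40320)).sub (Real.hasDerivAt_cos x)
      exact h.congr_deriv (by simp; ring))
    (by simp)
    (fun x hx => by have := sin_ge7 x hx; linarith)
    x hx
  linarith

lemma sin_le9 (x : ℝ) (hx : 0 ≤ x) : sin x ≤ x - x^3/6 + x^5/120 - x^7/5040 + x^9/362880 := by
  have := aux_nonneg
    (fun x => x - x^3/6 + x^5/120 - x^7/5040 + x^9/362880 - sin x)
    (fun x => 1 - x^2/2 + x^4/24 - x^6/720 + x^8/40320 - cos x)
    (fun x => by
      have h := (((((hasDerivAt_id x).sub ((hasDerivAt_pow 3 x).div_const 6)).add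
        ((hasDerivAt_pow 5 x).div_const 120)).sub ((hasDerivAt_pow 7 x).div_const 5040)).add
        ((hasDerivAt_pow 9 x).div_const 362880)).sub (Real.hasDerivAt_sin x)
      exact h.congr_deriv (by simp; ring))
    (by simp)
    (fun x hx => by have := cos_le8 x hx; linarith)
    x hx
  linarith

set_option maxHeartbeats 1000000 in
theorem grushin_W_bar_nonneg (z : ℝ) (hz : z ∈ Set.Ioo (0 : ℝ) π) :
    (64 - 25 * z ^ 2) * sin z ^ 2 + 10 * z * (z ^ 2 - 8) * cos z * sin z +
      z ^ 2 * (16 - z ^ 2) * cos z ^ 2 ≥ 0 := by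
  obtain ⟨h0, hp⟩ := hz
  have h0' : (0:ℝ) ≤ z := h0.le
  have hzb : z < 3.141593 := hp.trans pi_lt_d6
  have h16 : 0 < 16 - z ^ 2 := by nlinarith
  have hs : 0 ≤ sin z := sin_nonneg_of_nonneg_of_le_pi h0' hp.le
  have hs7 := sin_ge7 z h0'
  have hs9 := sin_le9 z h0'
  have hc8 := cos_le8 z h0'
  -- key inequality G ≥ 0
  have hG : 0 ≤ (48 - 19 * z ^ 2) * sin z - 3 * z * (16 - z ^ 2) * cos z := by
    have e2 : 3 * z * (16 - z ^ 2) * cos z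
        ≤ 3 * z * (16 - z ^ 2) * (1 - z^2/2 + z^4/24 - z^6/720 + z^8/40320) := by
      apply mul_le_mul_of_nonneg_left hc8
      nlinarith
    rcases le_or_gt (19 * z ^ 2) 48 with hw | hw
    · have e1 : (48 - 19 * z ^ 2) * (z - z^3/6 + z^5/120 - z^7/5040)
          ≤ (48 - 19 * z ^ 2) * sin z :=
        mul_le_mul_of_nonneg_left hs7 (by linarith)
      have hb : (0:ℝ) ≤ z^5 * (1/15 + z^2/42 - z^4/630 + z^6/13440) := by
        apply mul_nonneg (by positivity)
        nlinarith [sq_nonneg z, mul_nonneg (sq_nonneg z) (by linarith : (0:ℝ) ≤ 48 - 19 * z^2),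
          pow_nonneg h0' 6]
      linarith [e1, e2, hb]
    · have e1 : (48 - 19 * z ^ 2) * (z - z^3/6 + z^5/120 - z^7/5040 + z^9/362880)
          ≤ (48 - 19 * z ^ 2) * sin z :=
        mul_le_mul_of_nonpos_left hs9 (by linarith)
      have hb : (0:ℝ) ≤ z^5 * (1/15 + z^2/42 - 11*z^4/7560 + z^6/45360) := by
        apply mul_nonneg (by positivity)
        nlinarith [sq_nonneg z, mul_nonneg (sq_nonneg z) (by nlinarith : (0:ℝ) ≤ 16 - z^2),
          pow_nonneg h0' 6]
      linarith [e1, e2, hb]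
  -- L bound
  set L : ℝ := 5 * (8 - z ^ 2) * sin z - z * (16 - z ^ 2) * cos z with hLdef
  have hL : (24 + 4 * z ^ 2 / 3) * sin z ≤ L := by
    rw [hLdef]; nlinarith [hG]
  have hrs : 0 ≤ (24 + 4 * z ^ 2 / 3) * sin z := by positivity
  have hsq : ((24 + 4 * z ^ 2 / 3) * sin z) ^ 2 ≤ L ^ 2 := by
    apply sq_le_sq' _ hL
    nlinarith
  have key : 0 ≤ (16 - z ^ 2) * ((64 - 25 * z ^ 2) * sin z ^ 2 +
      10 * z * (z ^ 2 - 8) * cos z * sin z + z ^ 2 * (16 - z ^ 2) * cos z ^ 2) := by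
    have hid : (16 - z ^ 2) * ((64 - 25 * z ^ 2) * sin z ^ 2 +
        10 * z * (z ^ 2 - 8) * cos z * sin z + z ^ 2 * (16 - z ^ 2) * cos z ^ 2)
        = L ^ 2 - 64 * (9 + z ^ 2) * sin z ^ 2 := by
      rw [hLdef]; ring
    rw [hid]
    linarith [hsq, sq_nonneg (z ^ 2 * sin z)]
  have := (mul_nonneg_iff_of_pos_left h16).mp key
  linarith
end
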